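/- Characterization of independence via generalized entropy: Let S be a strictly proper scoring rule with induced generalized entropy H, and let ξ and η be jointly distributed random variables with ξ taking values in the measurable space Y. Then H(P_ξ) = E_η[H(P_{ξ|η})] holds if and only if ξ and η are independent, where P_ξ is the marginal distribution of ξ and P_{ξ|η} is a regular conditional distribution of ξ given η. -/

import Mathlib

open MeasureTheory ProbabilityTheory

noncomputable section

/-- Generalized entropy induced by a scoring rule `S`: `H(q) = ∫ S(q,y) dq(y)`. -/
def gEntropy {𝒴 : Type*} [MeasurableSpace 𝒴] (S : Measure 𝒴 → 𝒴 → ℝ) (q : Measure 𝒴) : ℝ :=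
  ∫ y, S q y ∂q

/-- A (negatively oriented) scoring rule is proper if the expected score is minimized by the
true distribution. -/
def IsProper {𝒴 : Type*} [MeasurableSpace 𝒴] (S : Measure 𝒴 → 𝒴 → ℝ) : Prop :=
  ∀ p q : Measure 𝒴, IsProbabilityMeasure p → IsProbabilityMeasure q →
    ∫ y, S p y ∂p ≤ ∫ y, S q y ∂p

/-- A scoring rule is strictly proper if it is proper and the minimum is uniquely attained at
the true distribution. -/
def IsStrictlyProper {𝒴 : Type*} [MeasurableSpace 𝒴] (S : Measure 𝒴 → 𝒴 → ℝ) : Prop :=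
  IsProper S ∧ ∀ p q : Measure 𝒴, IsProbabilityMeasure p → IsProbabilityMeasure q →
    q ≠ p → ∫ y, S p y ∂p < ∫ y, S q y ∂p

/-- **Characterization of independence via generalized entropy.**
For a strictly proper scoring rule `S` and jointly distributed random variables `ξ` (with
values in a standard Borel space) and `η`, `H(P_ξ) = E_η[H(P_{ξ|η})]` holds if and only if
`ξ` and `η` are independent. -/
theorem gEntropy_eq_iff_indepFun
    {Ω 𝒴 𝒵 : Type*} [MeasurableSpace Ω] [MeasurableSpace 𝒵]
    [MeasurableSpace 𝒴] [StandardBorelSpace 𝒴] [Nonempty 𝒴]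
    (μ : Measure Ω) [IsProbabilityMeasure μ]
    (S : Measure 𝒴 → 𝒴 → ℝ) (hS : IsStrictlyProper S)
    (ξ : Ω → 𝒴) (η : Ω → 𝒵)
    (hξ : Measurable ξ) (hη : Measurable η)
    -- all integrals appearing are assumed to be well defined and finite
    (hint_marg : Integrable (fun y => S (μ.map ξ) y) (μ.map ξ))
    (hint_cond : Integrable (fun ω => gEntropy S (condDistrib ξ η μ (η ω))) μ)
    (hint_cross : Integrable
      (fun ω => ∫ y, S (μ.map ξ) y ∂(condDistrib ξ η μ (η ω))) μ) :
    gEntropy S (μ.map ξ) = ∫ ω, gEntropy S (condDistrib ξ η μ (η ω)) ∂μ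
      ↔ IndepFun ξ η μ := by
  set p : Measure 𝒴 := μ.map ξ with hp
  set κ : ProbabilityTheory.Kernel 𝒵 𝒴 := condDistrib ξ η μ with hκ
  have hp_prob : IsProbabilityMeasure p := Measure.isProbabilityMeasure_map hξ.aemeasurable
  have hκ_prob : ∀ z, IsProbabilityMeasure (κ z) := fun z => inferInstance
  have hpair : Measurable fun ω => (η ω, ξ ω) := hη.prodMk hξ
  -- the defining property of `condDistrib`
  have hcp : μ.map (fun ω => (η ω, ξ ω)) = μ.map η ⊗ₘ κ := by
    rw [hκ, condDistrib, ← Measure.fst_map_prodMk (μ := μ) (X := η) hξ]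
    exact (Measure.disintegrate _ _).symm
  -- integrability of the cross term over the joint distribution
  have hmap_snd : (μ.map fun ω => (η ω, ξ ω)).map Prod.snd = p := by
    rw [Measure.map_map measurable_snd hpair]; rfl
  have hf_int : Integrable (fun q : 𝒵 × 𝒴 => S p q.2) (μ.map fun ω => (η ω, ξ ω)) := by
    have h1 : Integrable (fun y => S p y) ((μ.map fun ω => (η ω, ξ ω)).map Prod.snd) := by
      rw [hmap_snd]; exact hint_marg
    exact (integrable_map_measure h1.1 measurable_snd.aemeasurable).mp h1
  have hg_int : Integrable (fun z => ∫ y, S p y ∂(κ z)) (μ.map η) :=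
    hf_int.integral_condDistrib_map hξ.aemeasurable
  -- key identity: `H(p) = ∫ ω, ∫ y, S p y ∂(κ (η ω)) ∂μ`
  have hB : gEntropy S p = ∫ ω, ∫ y, S p y ∂(κ (η ω)) ∂μ := by
    calc gEntropy S p = ∫ ω, S p (ξ ω) ∂μ := integral_map hξ.aemeasurable hint_marg.1
      _ = ∫ q, S p q.2 ∂(μ.map fun ω => (η ω, ξ ω)) :=
        (integral_map hpair.aemeasurable hf_int.1).symm
      _ = ∫ z, ∫ y, S p y ∂(κ z) ∂(μ.map η) := by
        rw [hcp] at hf_int ⊢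
        rw [Measure.integral_compProd hf_int]
      _ = ∫ ω, ∫ y, S p y ∂(κ (η ω)) ∂μ := integral_map hη.aemeasurable hg_int.1
  -- pointwise properness inequality
  have hle : ∀ ω, gEntropy S (κ (η ω)) ≤ ∫ y, S p y ∂(κ (η ω)) :=
    fun ω => hS.1 (κ (η ω)) p (hκ_prob _) hp_prob
  constructor
  · -- forward direction
    intro hEq
    have hzero : ∫ ω, ((∫ y, S p y ∂(κ (η ω))) - gEntropy S (κ (η ω))) ∂μ = 0 := by
      rw [integral_sub hint_cross hint_cond, ← hB, ← hEq, sub_self]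
    have hae0 : (fun ω => (∫ y, S p y ∂(κ (η ω))) - gEntropy S (κ (η ω))) =ᵐ[μ] 0 :=
      (integral_eq_zero_iff_of_nonneg (fun ω => sub_nonneg.2 (hle ω))
        (hint_cross.sub hint_cond)).mp hzero
    -- a.e. equality of the conditional distribution with the marginal
    have haeq : ∀ᵐ ω ∂μ, κ (η ω) = p := by
      filter_upwards [hae0] with ω hω
      by_contra hne
      have := hS.2 (κ (η ω)) p (hκ_prob _) hp_prob (fun h => hne h.symm)
      have h2 : gEntropy S (κ (η ω)) = ∫ y, S p y ∂(κ (η ω)) := by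
        have := sub_eq_zero.mp hω
        linarith [this]
      exact absurd h2.symm (ne_of_gt this)
    -- deduce independence
    rw [indepFun_iff_measure_inter_preimage_eq_mul]
    intro s t hs ht
    have hset : ∫⁻ a in η ⁻¹' t, κ (η a) s ∂μ = μ (η ⁻¹' t ∩ ξ ⁻¹' s) :=
      setLIntegral_preimage_condDistrib hη hξ.aemeasurable hs ht
    have hcongr : ∫⁻ a in η ⁻¹' t, κ (η a) s ∂μ = ∫⁻ _ in η ⁻¹' t, p s ∂μ := by
      refine lintegral_congr_ae ?_
      have h' : ∀ᵐ ω ∂(μ.restrict (η ⁻¹' t)), κ (η ω) = p :=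
        ae_restrict_of_ae haeq
      filter_upwards [h'] with ω hω using by rw [hω]
    have hps : p s = μ (ξ ⁻¹' s) := Measure.map_apply hξ hs
    rw [hcongr, lintegral_const, Measure.restrict_apply_univ, hps] at hset
    rw [Set.inter_comm, ← hset, mul_comm]
  · -- reverse direction
    intro hIndep
    have hmapeq : μ.map (fun ω => (η ω, ξ ω)) = μ.map η ⊗ₘ Kernel.const 𝒵 p := by
      rw [Measure.compProd_const]
      exact (indepFun_iff_map_prod_eq_prod_map_map hη.aemeasurable hξ.aemeasurable).mp
        hIndep.symm
    have haez : ∀ᵐ z ∂(μ.map η), Kernel.const 𝒵 p z = κ z :=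
      (condDistrib_ae_eq_of_measure_eq_compProd η hξ.aemeasurable (κ := Kernel.const 𝒵 p) hmapeq).symm
    have haeq : ∀ᵐ ω ∂μ, κ (η ω) = p := by
      have := ae_of_ae_map hη.aemeasurable haez
      filter_upwards [this] with ω hω
      simpa [Kernel.const_apply] using hω.symm
    have : ∫ ω, gEntropy S (κ (η ω)) ∂μ = ∫ _, gEntropy S p ∂μ := by
      refine integral_congr_ae ?_
      filter_upwards [haeq] with ω hω using by rw [hω]
    rw [this, integral_const, probReal_univ, one_smul]
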